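/- Let r_* be the unique positive root of the equation 1+2r−r^{3/2}=0 (r_* ≈ 4.864). Then for all real numbers z, s with 0 < z < r_* and 0 < s < r_*, one has R_L(z,s) > 0, where R_L(z,s) := (2+4z−z^{3/2})/(1+z) − s^{3/2}/(1+s). -/
import Mathlib

/-- The step-ratio function `R_L(z,s) := (2+4z−z^{3/2})/(1+z) − s^{3/2}/(1+s)`. -/
noncomputable def RL (z s : ℝ) : ℝ :=
  (2 + 4 * z - z ^ ((3 : ℝ) / 2)) / (1 + z) - s ^ ((3 : ℝ) / 2) / (1 + s)

/-- Chord bound from strict convexity of `x ↦ x^(3/2)`. -/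
lemma rpow_chord (r x : ℝ) (hr : 0 < r) (hx0 : 0 < x) (hx1 : x < r) :
    x ^ ((3 : ℝ) / 2) < (x / r) * r ^ ((3 : ℝ) / 2) := by
  have hconv := strictConvexOn_rpow (p := (3 : ℝ) / 2) (by norm_num)
  have ha : (0 : ℝ) < 1 - x / r := by
    have : x / r < 1 := (div_lt_one hr).mpr hx1
    linarith
  have hb : (0 : ℝ) < x / r := div_pos hx0 hr
  have h := hconv.2 (Set.mem_Ici.mpr le_rfl) (Set.mem_Ici.mpr hr.le)
    (by exact fun h => absurd h.symm hr.ne') ha hb (by ring)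
  simp only [smul_eq_mul, mul_zero, zero_add] at h
  have h0 : (0 : ℝ) ^ ((3 : ℝ) / 2) = 0 := by
    rw [Real.zero_rpow]; norm_num
  rw [h0] at h
  have hxr : x / r * r = x := div_mul_cancel₀ x hr.ne'
  rw [hxr] at h
  linarith

theorem RL_pos
    (rstar : ℝ) (hrstar_pos : 0 < rstar)
    (hrstar_root : 1 + 2 * rstar - rstar ^ ((3 : ℝ) / 2) = 0)
    (hrstar_uniq : ∀ x : ℝ, 0 < x → 1 + 2 * x - x ^ ((3 : ℝ) / 2) = 0 → x = rstar)
    (z s : ℝ) (hz0 : 0 < z) (hz1 : z < rstar) (hs0 : 0 < s) (hs1 : s < rstar) :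
    0 < RL z s := by
  have hr32 : rstar ^ ((3 : ℝ) / 2) = 1 + 2 * rstar := by linarith
  have hz : z ^ ((3 : ℝ) / 2) < (z / rstar) * (1 + 2 * rstar) := by
    have := rpow_chord rstar z hrstar_pos hz0 hz1
    rwa [hr32] at this
  have hs : s ^ ((3 : ℝ) / 2) < (s / rstar) * (1 + 2 * rstar) := by
    have := rpow_chord rstar s hrstar_pos hs0 hs1
    rwa [hr32] at this
  set a := z ^ ((3 : ℝ) / 2) with ha
  set b := s ^ ((3 : ℝ) / 2) with hb
  have hb0 : 0 ≤ b := Real.rpow_nonneg hs0.le _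
  rw [RL, ← ha, ← hb, sub_pos, div_lt_div_iff₀ (by linarith) (by linarith)]
  have hza : a * rstar < z * (1 + 2 * rstar) := by
    have := (div_mul_eq_mul_div z rstar (1 + 2 * rstar)) ▸ hz
    calc a * rstar < (z / rstar) * (1 + 2 * rstar) * rstar := by
          exact mul_lt_mul_of_pos_right hz hrstar_pos
      _ = z * (1 + 2 * rstar) := by field_simp
  have hsb : b * rstar < s * (1 + 2 * rstar) := by
    calc b * rstar < (s / rstar) * (1 + 2 * rstar) * rstar := by
          exact mul_lt_mul_of_pos_right hs hrstar_pos
      _ = s * (1 + 2 * rstar) := by field_simp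
  nlinarith [mul_pos hz0 hs0, mul_pos (sub_pos.mpr hs1) hz0,
    mul_lt_mul_of_pos_right hza (show (0:ℝ) < 1 + s by linarith),
    mul_lt_mul_of_pos_right hsb (show (0:ℝ) < 1 + z by linarith),
    mul_pos hrstar_pos hz0, mul_pos hrstar_pos hs0]
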